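/- Let K be a field with algebraic closure K̄, and let f ∈ K[x] be a polynomial with deg f ≥ 2 and f′ ≠ 0; let d be the greatest proper divisor of deg f, and let D(t) = Res_X(f(X) − t, f′(X)) ∈ K[t] (a nonzero polynomial). If there exist at least d distinct elements b ∈ K̄ whose multiplicity as a root of D (regarded in K̄[t]) equals 1, then f is prime over K: there do not exist g, h ∈ K[x] with deg g ≥ 2 and deg h ≥ 2 such that f = g ∘ h. -/

import Mathlib

open Polynomial

/-- The Sylvester matrix of two polynomials `p, q ∈ R[X]` (with respect to their
`natDegree`s): the first `deg q` rows hold the coefficients of `p`, shifted, and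
the last `deg p` rows hold the coefficients of `q`, shifted. -/
noncomputable def sylvesterMatrix {R : Type*} [CommRing R] (p q : Polynomial R) :
    Matrix (Fin (q.natDegree + p.natDegree)) (Fin (q.natDegree + p.natDegree)) R :=
  Matrix.of fun i j =>
    if (i : ℕ) < q.natDegree then
      if (j : ℕ) ≤ p.natDegree + i then p.coeff (p.natDegree + i - j) else 0
    else
      if (j : ℕ) ≤ (i : ℕ) then q.coeff ((i : ℕ) - j) else 0

/-- The resultant `Res_X(p, q)` of two polynomials, as the determinant of their
Sylvester matrix. -/
noncomputable def resultant {R : Type*} [CommRing R] (p q : Polynomial R) : R :=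
  (sylvesterMatrix p q).det

/-- For `f ∈ K[x]` and an auxiliary variable `t`, the polynomial `f(X) − t`
regarded as a polynomial in `X` with coefficients in `K[t]`. -/
noncomputable def polySubT {K : Type*} [Field K] (f : Polynomial K) :
    Polynomial (Polynomial K) :=
  f.map Polynomial.C - Polynomial.C Polynomial.X

section SylvAux

variable {R : Type*} [CommRing R]

/-- Sylvester-type matrix with explicit degree parameters. -/
noncomputable def sylv (p q : Polynomial R) (dp dq : ℕ) :
    Matrix (Fin (dq + dp)) (Fin (dq + dp)) R :=
  Matrix.of fun i j =>
    if (i : ℕ) < dq then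
      if (j : ℕ) ≤ dp + i then p.coeff (dp + i - j) else 0
    else
      if (j : ℕ) ≤ (i : ℕ) then q.coeff ((i : ℕ) - j) else 0

theorem resultant_eq_sylv (p q : Polynomial R) {dp dq : ℕ} (hp : p.natDegree = dp)
    (hq : q.natDegree = dq) : _root_.resultant p q = (sylv p q dp dq).det := by
  subst hp; subst hq; rfl

theorem sylv_map {S : Type*} [CommRing S] (ψ : R →+* S) (p q : Polynomial R) (dp dq : ℕ) :
    (sylv p q dp dq).map ψ = sylv (p.map ψ) (q.map ψ) dp dq := by
  ext i j
  simp only [sylv, Matrix.map_apply, Matrix.of_apply, apply_ite ψ, map_zero, coeff_map]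

end SylvAux

section FieldAux

variable {F : Type*} [Field F]

private theorem coeff_sum_CX (n : ℕ) (c : ℕ → F) (m : ℕ) :
    (∑ k ∈ Finset.range n, C (c k) * X ^ k).coeff m = if m < n then c m else 0 := by
  rw [finset_sum_coeff]
  simp only [coeff_C_mul, coeff_X_pow, mul_ite, mul_one, mul_zero]
  rw [Finset.sum_ite_eq (Finset.range n) m c]
  simp [Finset.mem_range]

private theorem eq_sum_of_degree_lt {A : Polynomial F} {n : ℕ} (h : A.degree < (n : ℕ)) :
    A = ∑ k ∈ Finset.range n, C (A.coeff k) * X ^ k := by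
  ext m
  rw [coeff_sum_CX]
  split_ifs with hm
  · rfl
  · exact coeff_eq_zero_of_degree_lt (lt_of_lt_of_le h (by exact_mod_cast Nat.le_of_not_lt hm))

private theorem degree_sum_CX_lt (n : ℕ) (c : ℕ → F) (hn : 0 < n) :
    (∑ k ∈ Finset.range n, C (c k) * X ^ k).degree < ((n : ℕ) : WithBot ℕ) := by
  apply lt_of_le_of_lt (degree_sum_le _ _)
  rw [Finset.sup_lt_iff (by exact_mod_cast WithBot.bot_lt_coe n)]
  intro k hk
  exact lt_of_le_of_lt (degree_C_mul_X_pow_le k (c k))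
    (by exact_mod_cast Finset.mem_range.mp hk)

private theorem degree_mul_lt' {A p : Polynomial F} {dA dP n : ℕ}
    (hA : A.degree ≤ (dA : ℕ)) (hp : p.degree ≤ (dP : ℕ)) (h : dA + dP < n) :
    (A * p).degree < ((n : ℕ) : WithBot ℕ) := by
  apply lt_of_le_of_lt (degree_mul_le A p)
  rcases eq_or_ne A 0 with rfl | hA0
  · simp only [degree_zero, WithBot.bot_add]
    exact WithBot.bot_lt_coe _
  rcases eq_or_ne p 0 with rfl | hp0
  · simp only [degree_zero, WithBot.add_bot]
    exact WithBot.bot_lt_coe _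
  rw [degree_eq_natDegree hA0, degree_eq_natDegree hp0]
  rw [degree_eq_natDegree hA0] at hA
  rw [degree_eq_natDegree hp0] at hp
  have h1 : A.natDegree ≤ dA := by exact_mod_cast hA
  have h2 : p.natDegree ≤ dP := by exact_mod_cast hp
  exact_mod_cast by omega

private theorem degree_mul_lt {A p : Polynomial F} {dA dP : ℕ}
    (hA : A.degree < (dA : ℕ)) (hp : p.degree ≤ (dP : ℕ)) :
    (A * p).degree < ((dA + dP : ℕ) : WithBot ℕ) := by
  rcases eq_or_ne A 0 with rfl | hA0
  · simp only [zero_mul, degree_zero]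
    exact WithBot.bot_lt_coe _
  have hdA : 0 < dA := by
    by_contra hz
    have : dA = 0 := by omega
    subst this
    rw [degree_eq_natDegree hA0] at hA
    exact absurd hA (by exact_mod_cast Nat.not_lt_zero _)
  have hA' : A.degree ≤ ((dA - 1 : ℕ) : WithBot ℕ) := by
    rw [degree_eq_natDegree hA0] at hA ⊢
    have : A.natDegree < dA := by exact_mod_cast hA
    exact_mod_cast by omega
  exact degree_mul_lt' hA' hp (by omega)

/-- encoding of a pair of polynomials as a vector -/
noncomputable def enc (dp dq : ℕ) (A B : Polynomial F) : Fin (dq + dp) → F :=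
  fun i => if (i : ℕ) < dq then A.coeff (dq - 1 - i) else B.coeff (dq + dp - 1 - i)

theorem enc_eq_zero {dp dq : ℕ} {A B : Polynomial F}
    (hA : A.degree < (dq : ℕ)) (hB : B.degree < (dp : ℕ))
    (h : enc dp dq A B = 0) : A = 0 ∧ B = 0 := by
  constructor
  · ext k
    rcases lt_or_ge k dq with hk | hk
    · have hi : dq - 1 - k < dq + dp := by omega
      have h2 : (if dq - 1 - k < dq then A.coeff (dq - 1 - (dq - 1 - k))
          else B.coeff (dq + dp - 1 - (dq - 1 - k))) = 0 := congrFun h ⟨dq - 1 - k, hi⟩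
      rw [if_pos (by omega : dq - 1 - k < dq)] at h2
      have e : dq - 1 - (dq - 1 - k) = k := by omega
      rw [e] at h2
      rw [coeff_zero]
      exact h2
    · rw [coeff_zero]
      exact coeff_eq_zero_of_degree_lt (lt_of_lt_of_le hA (by exact_mod_cast hk))
  · ext k
    rcases lt_or_ge k dp with hk | hk
    · have hi : dq + dp - 1 - k < dq + dp := by omega
      have h2 : (if dq + dp - 1 - k < dq then A.coeff (dq - 1 - (dq + dp - 1 - k))
          else B.coeff (dq + dp - 1 - (dq + dp - 1 - k))) = 0 := congrFun h ⟨dq + dp - 1 - k, hi⟩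
      rw [if_neg (by omega : ¬ dq + dp - 1 - k < dq)] at h2
      have e : dq + dp - 1 - (dq + dp - 1 - k) = k := by omega
      rw [e] at h2
      rw [coeff_zero]
      exact h2
    · rw [coeff_zero]
      exact coeff_eq_zero_of_degree_lt (lt_of_lt_of_le hB (by exact_mod_cast hk))

private theorem enc_core (p q : Polynomial F) (dp dq : ℕ) (A B : Polynomial F)
    (hA : A.degree < (dq : ℕ)) (hB : B.degree < (dp : ℕ)) (jv : ℕ) (hjv : jv < dq + dp) :
    ∑ i ∈ Finset.range (dq + dp),
      ((if i < dq then A.coeff (dq - 1 - i) else B.coeff (dq + dp - 1 - i)) *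
       (if i < dq then (if jv ≤ dp + i then p.coeff (dp + i - jv) else 0)
        else (if jv ≤ i then q.coeff (i - jv) else 0)))
      = (A * p + B * q).coeff (dq + dp - 1 - jv) := by
  classical
  set m : ℕ := dq + dp - 1 - jv with hm
  set g : ℕ → F := fun i =>
    (if i < dq then A.coeff (dq - 1 - i) else B.coeff (dq + dp - 1 - i)) *
    (if i < dq then (if jv ≤ dp + i then p.coeff (dp + i - jv) else 0)
     else (if jv ≤ i then q.coeff (i - jv) else 0)) with hg
  rw [Finset.range_eq_Ico,
    ← Finset.sum_Ico_consecutive _ (Nat.zero_le dq) (Nat.le_add_right dq dp), coeff_add]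
  congr 1
  · rw [← Finset.range_eq_Ico]
    have hAp : (A * p).coeff m
        = ∑ k ∈ Finset.range dq, A.coeff k * (if k ≤ m then p.coeff (m - k) else 0) := by
      conv_lhs => rw [eq_sum_of_degree_lt hA, Finset.sum_mul]
      rw [finset_sum_coeff]
      refine Finset.sum_congr rfl fun k _ => ?_
      rw [mul_assoc, mul_comm (X ^ k) p, ← mul_assoc, coeff_mul_X_pow', coeff_C_mul]
      split_ifs <;> simp
    rw [hAp, ← Finset.sum_range_reflect
      (fun k => A.coeff k * (if k ≤ m then p.coeff (m - k) else 0)) dq]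
    refine Finset.sum_congr rfl fun i hi => ?_
    have hi' : i < dq := Finset.mem_range.mp hi
    simp only [hg, if_pos hi']
    by_cases hc : jv ≤ dp + i
    · have hcond : dq - 1 - i ≤ m := by omega
      have hval : dp + i - jv = m - (dq - 1 - i) := by omega
      rw [if_pos hc, if_pos hcond, hval]
    · have hcond : ¬ dq - 1 - i ≤ m := by omega
      rw [if_neg hc, if_neg hcond]
  · have hdd : dq + dp - dq = dp := by omega
    rw [Finset.sum_Ico_eq_sum_range, hdd]
    have hBq : (B * q).coeff m
        = ∑ k ∈ Finset.range dp, B.coeff k * (if k ≤ m then q.coeff (m - k) else 0) := by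
      conv_lhs => rw [eq_sum_of_degree_lt hB, Finset.sum_mul]
      rw [finset_sum_coeff]
      refine Finset.sum_congr rfl fun k _ => ?_
      rw [mul_assoc, mul_comm (X ^ k) q, ← mul_assoc, coeff_mul_X_pow', coeff_C_mul]
      split_ifs <;> simp
    rw [hBq, ← Finset.sum_range_reflect
      (fun k => B.coeff k * (if k ≤ m then q.coeff (m - k) else 0)) dp]
    refine Finset.sum_congr rfl fun r hr => ?_
    have hr' : r < dp := Finset.mem_range.mp hr
    simp only [hg, if_neg (by omega : ¬ dq + r < dq)]
    by_cases hc : jv ≤ dq + r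
    · have hcond : dp - 1 - r ≤ m := by omega
      have hval : dq + r - jv = m - (dp - 1 - r) := by omega
      have hB2 : dq + dp - 1 - (dq + r) = dp - 1 - r := by omega
      rw [if_pos hc, if_pos hcond, hval, hB2]
    · have hcond : ¬ dp - 1 - r ≤ m := by omega
      have hB2 : dq + dp - 1 - (dq + r) = dp - 1 - r := by omega
      rw [if_neg hc, if_neg hcond, hB2]

theorem vecMul_enc (p q : Polynomial F) (dp dq : ℕ) (A B : Polynomial F)
    (hA : A.degree < (dq : ℕ)) (hB : B.degree < (dp : ℕ)) (j : Fin (dq + dp)) :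
    Matrix.vecMul (enc dp dq A B) (sylv p q dp dq) j
      = (A * p + B * q).coeff (dq + dp - 1 - (j : ℕ)) := by
  classical
  have hLHS : Matrix.vecMul (enc dp dq A B) (sylv p q dp dq) j
      = ∑ i ∈ Finset.range (dq + dp),
        ((if i < dq then A.coeff (dq - 1 - i) else B.coeff (dq + dp - 1 - i)) *
         (if i < dq then (if (j : ℕ) ≤ dp + i then p.coeff (dp + i - (j : ℕ)) else 0)
          else (if (j : ℕ) ≤ i then q.coeff (i - (j : ℕ)) else 0))) := by
    rw [← Fin.sum_univ_eq_sum_range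
      (fun i => ((if i < dq then A.coeff (dq - 1 - i) else B.coeff (dq + dp - 1 - i)) *
         (if i < dq then (if (j : ℕ) ≤ dp + i then p.coeff (dp + i - (j : ℕ)) else 0)
          else (if (j : ℕ) ≤ i then q.coeff (i - (j : ℕ)) else 0)))) (dq + dp)]
    simp only [Matrix.vecMul, dotProduct]
    refine Finset.sum_congr rfl fun i _ => ?_
    simp only [enc, sylv, Matrix.of_apply]
  rw [hLHS]
  exact enc_core p q dp dq A B hA hB (j : ℕ) j.isLt

theorem sylv_det_eq_zero_common_root {F : Type*} [Field F] [IsAlgClosed F]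
    (p q : Polynomial F) (dp dq : ℕ)
    (hp : p.natDegree = dp) (hq : q.natDegree = dq) (hp0 : p ≠ 0) (hq0 : q ≠ 0)
    (hdp : 0 < dp) (hdet : (sylv p q dp dq).det = 0) :
    ∃ γ : F, p.eval γ = 0 ∧ q.eval γ = 0 := by
  classical
  obtain ⟨v, hv0, hv⟩ := Matrix.exists_vecMul_eq_zero_iff.mpr hdet
  set A : Polynomial F :=
    ∑ k ∈ Finset.range dq, C (v ⟨dq - 1 - k, by omega⟩) * X ^ k with hAdef
  set B : Polynomial F :=
    ∑ k ∈ Finset.range dp, C (v ⟨dq + dp - 1 - k, by omega⟩) * X ^ k with hBdef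
  have hdegA : A.degree < (dq : ℕ) := by
    rcases Nat.eq_zero_or_pos dq with h0 | h0
    · have hempty : Finset.range dq = ∅ := by rw [h0]; rfl
      rw [hAdef, hempty, Finset.sum_empty, degree_zero]
      exact WithBot.bot_lt_coe _
    · exact degree_sum_CX_lt dq _ h0
  have hdegB : B.degree < (dp : ℕ) := degree_sum_CX_lt dp _ hdp
  have hencA : enc dp dq A B = v := by
    funext i
    simp only [enc]
    split_ifs with hi
    · rw [hAdef, coeff_sum_CX, if_pos (by omega : dq - 1 - (i : ℕ) < dq)]
      congr 1
      ext
      simp only []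
      omega
    · rw [hBdef, coeff_sum_CX, if_pos (by omega : dq + dp - 1 - (i : ℕ) < dp)]
      congr 1
      ext
      simp only []
      omega
  have hker : ∀ j : Fin (dq + dp), (A * p + B * q).coeff (dq + dp - 1 - (j : ℕ)) = 0 := by
    intro j
    rw [← vecMul_enc p q dp dq A B hdegA hdegB j, hencA]
    exact congrFun hv j
  have hAB : A * p + B * q = 0 := by
    ext mm
    rw [coeff_zero]
    rcases lt_or_ge mm (dq + dp) with hmm | hmm
    · have h2 := hker ⟨dq + dp - 1 - mm, by omega⟩
      have e : dq + dp - 1 - (dq + dp - 1 - mm) = mm := by omega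
      rwa [show ((⟨dq + dp - 1 - mm, by omega⟩ : Fin (dq + dp)) : ℕ) = dq + dp - 1 - mm from rfl,
        e] at h2
    · refine coeff_eq_zero_of_degree_lt (lt_of_le_of_lt (degree_add_le _ _) ?_)
      rw [max_lt_iff]
      constructor
      · exact lt_of_lt_of_le (degree_mul_lt hdegA (hp ▸ degree_le_natDegree))
          (by exact_mod_cast hmm)
      · refine lt_of_lt_of_le ?_ (show ((dq + dp : ℕ) : WithBot ℕ) ≤ mm by exact_mod_cast hmm)
        have := degree_mul_lt hdegB (hq ▸ degree_le_natDegree)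
        convert this using 2
        omega
  have hABnz : ¬ (A = 0 ∧ B = 0) := by
    rintro ⟨hA0, hB0⟩
    apply hv0
    rw [← hencA, hA0, hB0]
    funext i
    simp [enc]
  have hnotco : ¬ IsCoprime p q := by
    intro hco
    have hB0 : B ≠ 0 := by
      intro hB0
      have : A * p = 0 := by rw [hB0, zero_mul, add_zero] at hAB; exact hAB
      rcases mul_eq_zero.mp this with hA0 | hp0'
      · exact hABnz ⟨hA0, hB0⟩
      · exact hp0 hp0'
    have hdvd : p ∣ B * q := by
      refine ⟨-A, ?_⟩
      have : B * q = -(A * p) := by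
        rw [eq_neg_iff_add_eq_zero, add_comm]
        exact hAB
      rw [this]
      ring
    have hpB : p ∣ B := hco.dvd_of_dvd_mul_right hdvd
    have h1 : p.degree ≤ B.degree := degree_le_of_dvd hpB hB0
    have h2 : B.degree < p.degree := by
      rw [degree_eq_natDegree hp0, hp]
      exact hdegB
    exact absurd (lt_of_le_of_lt h1 h2) (lt_irrefl _)
  set G := EuclideanDomain.gcd p q with hG
  have hG0 : G ≠ 0 := fun h0 => hp0 (EuclideanDomain.gcd_eq_zero_iff.mp h0).1
  have hGu : ¬ IsUnit G := fun hu => hnotco (EuclideanDomain.gcd_isUnit_iff.mp hu)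
  have hGdeg : G.degree ≠ 0 := fun h0 => hGu (isUnit_iff_degree_eq_zero.mpr h0)
  obtain ⟨γ, hγ⟩ := IsAlgClosed.exists_root G hGdeg
  exact ⟨γ, eval_eq_zero_of_dvd_of_eval_eq_zero (EuclideanDomain.gcd_dvd_left p q) hγ,
    eval_eq_zero_of_dvd_of_eval_eq_zero (EuclideanDomain.gcd_dvd_right p q) hγ⟩

theorem kernel_pair {F : Type*} [Field F] (p q c : Polynomial F) {dp dq : ℕ}
    (hp : p.natDegree = dp) (hq : q.natDegree = dq)
    (hp0 : p ≠ 0) (hq0 : q ≠ 0) (hc2 : 2 ≤ c.natDegree)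
    (hcp : c ∣ p) (hcq : c ∣ q) :
    ∃ v w : Fin (dq + dp) → F,
      Matrix.vecMul v (sylv p q dp dq) = 0 ∧
      Matrix.vecMul w (sylv p q dp dq) = 0 ∧
      (∀ a b : F, a • v + b • w = 0 → a = 0 ∧ b = 0) := by
  classical
  obtain ⟨p₁, hp₁⟩ := hcp
  obtain ⟨q₁, hq₁⟩ := hcq
  have hc0 : c ≠ 0 := fun h0 => hp0 (by rw [hp₁, h0, zero_mul])
  have hp₁0 : p₁ ≠ 0 := fun h0 => hp0 (by rw [hp₁, h0, mul_zero])
  have hq₁0 : q₁ ≠ 0 := fun h0 => hq0 (by rw [hq₁, h0, mul_zero])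
  have hdp2 : c.natDegree + p₁.natDegree = dp := by
    rw [← hp, hp₁, natDegree_mul hc0 hp₁0]
  have hdq2 : c.natDegree + q₁.natDegree = dq := by
    rw [← hq, hq₁, natDegree_mul hc0 hq₁0]
  have hq₁d : q₁.degree ≤ ((dq - 2 : ℕ) : WithBot ℕ) := by
    refine le_trans degree_le_natDegree ?_
    exact_mod_cast by omega
  have hp₁d : p₁.degree ≤ ((dp - 2 : ℕ) : WithBot ℕ) := by
    refine le_trans degree_le_natDegree ?_
    exact_mod_cast by omega
  have hdq2' : 2 ≤ dq := by omega
  have hdp2' : 2 ≤ dp := by omega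
  have hdegq₁ : q₁.degree < (dq : ℕ) :=
    lt_of_le_of_lt hq₁d (by exact_mod_cast by omega)
  have hdegp₁ : (-p₁).degree < (dp : ℕ) := by
    rw [degree_neg]
    exact lt_of_le_of_lt hp₁d (by exact_mod_cast by omega)
  have hX1 : (X : Polynomial F).degree ≤ ((1 : ℕ) : WithBot ℕ) := by
    exact_mod_cast degree_X_le
  have hdegXq₁ : (X * q₁).degree < ((dq : ℕ) : WithBot ℕ) := by
    exact degree_mul_lt' hX1 hq₁d (by omega)
  have hdegXp₁ : (-(X * p₁)).degree < ((dp : ℕ) : WithBot ℕ) := by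
    rw [degree_neg]
    exact degree_mul_lt' hX1 hp₁d (by omega)
  refine ⟨enc dp dq q₁ (-p₁), enc dp dq (X * q₁) (-(X * p₁)), ?_, ?_, ?_⟩
  · funext j
    rw [vecMul_enc p q dp dq _ _ hdegq₁ hdegp₁ j]
    have : q₁ * p + (-p₁) * q = 0 := by rw [hp₁, hq₁]; ring
    rw [this, coeff_zero]
    rfl
  · funext j
    rw [vecMul_enc p q dp dq _ _ hdegXq₁ hdegXp₁ j]
    have : (X * q₁) * p + (-(X * p₁)) * q = 0 := by rw [hp₁, hq₁]; ring
    rw [this, coeff_zero]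
    rfl
  · intro a b hab
    have hcomb : a • enc dp dq q₁ (-p₁) + b • enc dp dq (X * q₁) (-(X * p₁))
        = enc dp dq ((C a + C b * X) * q₁) (-((C a + C b * X) * p₁)) := by
      funext i
      simp only [enc, Pi.add_apply, Pi.smul_apply, smul_eq_mul]
      split_ifs with hi
      · have e1 : (C a + C b * X) * q₁ = C a * q₁ + C b * (X * q₁) := by ring
        rw [e1, coeff_add, coeff_C_mul, coeff_C_mul]
      · have e1 : -((C a + C b * X) * p₁) = C a * (-p₁) + C b * (-(X * p₁)) := by ring
        rw [e1, coeff_add, coeff_C_mul, coeff_C_mul]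
    rw [hcomb] at hab
    have hCab : (C a + C b * X).degree ≤ ((1 : ℕ) : WithBot ℕ) := by
      refine le_trans (degree_add_le _ _) (max_le (le_trans degree_C_le ?_) ?_)
      · exact_mod_cast Nat.zero_le 1
      · have h2 := degree_C_mul_X_pow_le 1 b
        rw [pow_one] at h2
        exact_mod_cast h2
    have hd1 : ((C a + C b * X) * q₁).degree < ((dq : ℕ) : WithBot ℕ) := by
      exact degree_mul_lt' hCab hq₁d (by omega)
    have hd2 : (-((C a + C b * X) * p₁)).degree < ((dp : ℕ) : WithBot ℕ) := by
      rw [degree_neg]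
      exact degree_mul_lt' hCab hp₁d (by omega)
    obtain ⟨h1, -⟩ := enc_eq_zero hd1 hd2 hab
    have h2 : C a + C b * X = 0 := by
      rcases mul_eq_zero.mp h1 with h2 | h2
      · exact h2
      · exact absurd h2 hq₁0
    constructor
    · have := congrArg (fun r => Polynomial.coeff r 0) h2
      simpa using this
    · have := congrArg (fun r => Polynomial.coeff r 1) h2
      simpa using this

theorem det_dvd_sq {F : Type*} [Field F] {n : ℕ}
    (M : Matrix (Fin n) (Fin n) (Polynomial F))
    (M0 E : Matrix (Fin n) (Fin n) F) (b : F)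
    (hM : ∀ i j, M i j = C (M0 i j) + (X - C b) * C (E i j))
    (v w : Fin n → F) (hv : Matrix.vecMul v M0 = 0) (hw : Matrix.vecMul w M0 = 0)
    (hind : ∀ a b' : F, a • v + b' • w = 0 → a = 0 ∧ b' = 0) :
    (X - C b) ^ 2 ∣ M.det := by
  classical
  have hv0 : v ≠ 0 := by
    intro h0
    have := (hind 1 0 (by rw [h0]; funext i; simp)).1
    exact one_ne_zero this
  obtain ⟨a, hva⟩ : ∃ a, v a ≠ 0 := Function.ne_iff.mp hv0
  obtain ⟨μ, hμ⟩ : ∃ x : F, x = w a / v a := ⟨_, rfl⟩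
  obtain ⟨w', hw'def⟩ : ∃ x : Fin n → F, x = w - μ • v := ⟨_, rfl⟩
  have hw'a : w' a = 0 := by
    simp only [hw'def, Pi.sub_apply, Pi.smul_apply, smul_eq_mul, hμ]
    field_simp
    ring
  have hw'0 : w' ≠ 0 := by
    intro h0
    have hcomb : (-μ) • v + (1 : F) • w = 0 := by
      funext i
      have := congrFun h0 i
      simp only [hw'def, Pi.sub_apply, Pi.smul_apply, smul_eq_mul, Pi.zero_apply] at this
      simp only [Pi.add_apply, Pi.smul_apply, smul_eq_mul, Pi.zero_apply]
      linear_combination this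
    exact one_ne_zero (hind _ _ hcomb).2
  obtain ⟨cc, hwc⟩ : ∃ cc, w' cc ≠ 0 := Function.ne_iff.mp hw'0
  have hac : cc ≠ a := by
    rintro rfl
    exact hwc hw'a
  have hw'M : Matrix.vecMul w' M0 = 0 := by
    rw [hw'def, Matrix.sub_vecMul, Matrix.smul_vecMul, hv, hw]
    simp
  -- the row-operation matrix
  obtain ⟨P, hPdef⟩ : ∃ x : Matrix (Fin n) (Fin n) F, x = Matrix.of fun i j =>
    if i = a then v j else if i = cc then w' j else if i = j then 1 else 0 := ⟨_, rfl⟩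
  have hProw : ∀ (x : Fin n → F) (j : Fin n), Matrix.vecMul x P j
      = x a * v j + x cc * w' j + (if j = a then 0 else if j = cc then 0 else x j) := by
    intro x j
    simp only [Matrix.vecMul, dotProduct]
    rw [Finset.sum_eq_sum_sdiff_singleton_add (Finset.mem_univ a)]
    rw [Finset.sum_eq_sum_sdiff_singleton_add
      (show cc ∈ Finset.univ \ {a} by simp [hac])]
    have e1 : ∀ i ∈ (Finset.univ \ {a}) \ {cc},
        x i * P i j = if i = j then x i else 0 := by
      intro i hi
      simp only [Finset.mem_sdiff, Finset.mem_singleton, Finset.mem_univ, true_and] at hi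
      simp only [hPdef, Matrix.of_apply, if_neg hi.1, if_neg hi.2]
      split_ifs <;> ring
    rw [Finset.sum_congr rfl e1, Finset.sum_ite_eq' _ j x]
    have hPa : P a j = v j := by simp [hPdef]
    have hPcc : P cc j = w' j := by simp [hPdef, hac]
    rw [hPa, hPcc]
    by_cases hja : j = a
    · subst hja
      rw [if_neg (by simp), if_pos rfl]
      ring
    · by_cases hjc : j = cc
      · subst hjc
        rw [if_neg (by simp), if_neg hja, if_pos rfl]
        ring
      · rw [if_pos (by simp [Ne.symm, hja, hjc]), if_neg hja, if_neg hjc]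
        ring
  have hPdet : P.det ≠ 0 := by
    intro hdet
    obtain ⟨x, hx0, hx⟩ := Matrix.exists_vecMul_eq_zero_iff.mpr hdet
    have hxa : x a = 0 := by
      have h2 := congrFun hx a
      rw [hProw x a] at h2
      simp only [Pi.zero_apply, eq_self_iff_true, if_true, hw'a, mul_zero, add_zero] at h2
      rcases mul_eq_zero.mp h2 with h3 | h3
      · exact h3
      · exact absurd h3 hva
    have hxc : x cc = 0 := by
      have h2 := congrFun hx cc
      rw [hProw x cc] at h2
      rw [if_neg hac, if_pos rfl] at h2
      simp only [Pi.zero_apply, add_zero, hxa, zero_mul, zero_add] at h2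
      rcases mul_eq_zero.mp h2 with h3 | h3
      · exact h3
      · exact absurd h3 hwc
    apply hx0
    funext j
    have h2 := congrFun hx j
    rw [hProw x j] at h2
    simp only [Pi.zero_apply, hxa, hxc, zero_mul, zero_add] at h2
    by_cases hja : j = a
    · simp [hja, hxa]
    · by_cases hjc : j = cc
      · simp [hjc, hxc]
      · rw [if_neg hja, if_neg hjc] at h2
        simpa using h2
  obtain ⟨s, hs⟩ : ∃ x : Polynomial F, x = X - C b := ⟨_, rfl⟩
  have hrow : ∀ (u : Fin n → F), Matrix.vecMul u M0 = 0 →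
      ∀ j, (Matrix.vecMul (fun k => C (u k)) M) j = s * C (Matrix.vecMul u E j) := by
    intro u hu j
    simp only [Matrix.vecMul, dotProduct]
    have e1 : ∀ k, C (u k) * M k j = C (u k * M0 k j) + s * C (u k * E k j) := by
      intro k
      rw [hM k j, map_mul, map_mul, hs]
      ring
    rw [Finset.sum_congr rfl fun k _ => e1 k, Finset.sum_add_distrib, ← Finset.mul_sum,
      ← map_sum, ← map_sum]
    have hu' : (∑ k, u k * M0 k j) = 0 := by
      have h2 := congrFun hu j
      simpa [Matrix.vecMul, dotProduct] using h2
    rw [hu', map_zero, zero_add]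
  obtain ⟨Z, hZdef⟩ : ∃ x : Matrix (Fin n) (Fin n) (Polynomial F), x = P.map C * M := ⟨_, rfl⟩
  have hZrow : ∀ (i : Fin n), Z i = Matrix.vecMul (fun k => C (P i k)) M := by
    intro i
    funext j
    simp only [hZdef, Matrix.mul_apply, Matrix.vecMul, dotProduct, Matrix.map_apply]
  have hZa : Z a = s • (fun j => C (Matrix.vecMul v E j)) := by
    funext j
    rw [hZrow a]
    have e2 : (fun k => C (P a k)) = fun k => C (v k) := by
      funext k
      simp [hPdef]
    rw [e2, hrow v hv j]
    simp
  have hZcc : Z cc = s • (fun j => C (Matrix.vecMul w' E j)) := by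
    funext j
    rw [hZrow cc]
    have e2 : (fun k => C (P cc k)) = fun k => C (w' k) := by
      funext k
      simp [hPdef, hac]
    rw [e2, hrow w' hw'M j]
    simp
  obtain ⟨Z₁, hZ₁def⟩ : ∃ x : Matrix (Fin n) (Fin n) (Polynomial F),
    x = Matrix.updateRow Z a (fun j => C (Matrix.vecMul v E j)) := ⟨_, rfl⟩
  have step1 : Z.det = s * Z₁.det := by
    conv_lhs => rw [← Matrix.updateRow_eq_self Z a, hZa]
    rw [Matrix.det_updateRow_smul, ← hZ₁def]
  have hZ₁cc : Z₁ cc = s • (fun j => C (Matrix.vecMul w' E j)) := by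
    rw [hZ₁def, Matrix.updateRow_ne hac]
    exact hZcc
  have step2 : Z₁.det
      = s * (Matrix.updateRow Z₁ cc (fun j => C (Matrix.vecMul w' E j))).det := by
    conv_lhs => rw [← Matrix.updateRow_eq_self Z₁ cc, hZ₁cc]
    rw [Matrix.det_updateRow_smul]
  have hZdet : Z.det = C P.det * M.det := by
    rw [hZdef, Matrix.det_mul]
    congr 1
    exact (RingHom.map_det C P).symm
  have hdvd : s ^ 2 ∣ C P.det * M.det := by
    rw [← hZdet, step1, step2]
    exact ⟨(Z₁.updateRow cc fun j => C (Matrix.vecMul w' E j)).det, by ring⟩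
  obtain ⟨r, hr⟩ := hdvd
  refine ⟨C (P.det)⁻¹ * r, ?_⟩
  have hMdet : M.det = C (P.det)⁻¹ * (C P.det * M.det) := by
    rw [← mul_assoc, ← map_mul, inv_mul_cancel₀ hPdet, map_one, one_mul]
  rw [hMdet, hr, ← hs]
  ring

end FieldAux

theorem polySubT_coeff {K : Type*} [Field K] (f : Polynomial K) (k : ℕ) :
    (polySubT f).coeff k = C (f.coeff k) - if k = 0 then X else 0 := by
  rw [show polySubT f = f.map C - C X from rfl, coeff_sub, coeff_map, coeff_C]

/-- Let `K` be a field with algebraic closure `K̄`, and `f ∈ K[x]`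
with `deg f ≥ 2` and `f' ≠ 0`; let `d` be the greatest proper divisor of `deg f` and
`D(t) = Res_X(f(X) − t, f'(X)) ∈ K[t]`.  If at least `d` distinct elements `b ∈ K̄`
have multiplicity exactly `1` as roots of `D`, then `f` is prime over `K`: there do
not exist `g, h ∈ K[x]` with `deg g ≥ 2`, `deg h ≥ 2` and `f = g ∘ h`. -/
theorem stmt_12 {K Kbar : Type*} [Field K] [Field Kbar] [Algebra K Kbar]
    [IsAlgClosure K Kbar] (f : Polynomial K) (hdeg : 2 ≤ f.natDegree)
    (hf' : derivative f ≠ 0)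
    (d : ℕ) (hd : d ∣ f.natDegree) (hdlt : d < f.natDegree)
    (hdmax : ∀ e : ℕ, e ∣ f.natDegree → e < f.natDegree → e ≤ d)
    (S : Finset Kbar) (hS : d ≤ S.card)
    (hsimple : ∀ b ∈ S,
      ((_root_.resultant (polySubT f) ((derivative f).map Polynomial.C)).map
          (algebraMap K Kbar)).rootMultiplicity b = 1) :
    ¬ ∃ g h : Polynomial K, 2 ≤ g.natDegree ∧ 2 ≤ h.natDegree ∧ f = g.comp h := by
  rintro ⟨g, h, hg2, hh2, hf⟩
  classical
  haveI : IsAlgClosed Kbar := IsAlgClosure.isAlgClosed K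
  set φ : K →+* Kbar := algebraMap K Kbar with hφdef
  have hφ : Function.Injective φ := φ.injective
  set Db : Polynomial Kbar :=
    (_root_.resultant (polySubT f) ((derivative f).map Polynomial.C)).map φ with hDbdef
  set n1 : ℕ := f.natDegree with hn1
  set n2 : ℕ := (derivative f).natDegree with hn2
  obtain ⟨fb, hfbdef⟩ : ∃ x : Polynomial Kbar, x = f.map φ := ⟨_, rfl⟩
  obtain ⟨gb, hgbdef⟩ : ∃ x : Polynomial Kbar, x = g.map φ := ⟨_, rfl⟩
  obtain ⟨hbp, hhbdef⟩ : ∃ x : Polynomial Kbar, x = h.map φ := ⟨_, rfl⟩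
  have hfbdeg : fb.natDegree = n1 := by
    rw [hfbdef]; exact natDegree_map_eq_of_injective hφ f
  have hfb' : derivative fb = (derivative f).map φ := by
    rw [hfbdef]; exact derivative_map f φ
  have hfb'0 : derivative fb ≠ 0 := by
    rw [hfb']
    exact (Polynomial.map_ne_zero_iff hφ).mpr hf'
  have hfb'deg : (derivative fb).natDegree = n2 := by
    rw [hfb']; exact natDegree_map_eq_of_injective hφ _
  -- degrees over K[t]
  have hpsT : (polySubT f).natDegree = n1 := by
    have h1 : (f.map (C : K →+* Polynomial K)).natDegree = n1 :=
      natDegree_map_eq_of_injective C_injective f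
    have h2 : (C (X : Polynomial K)).natDegree = 0 := natDegree_C _
    have h3 := natDegree_sub_eq_left_of_natDegree_lt
      (p := f.map (C : K →+* Polynomial K)) (q := C X) (by rw [h1, h2]; omega)
    rw [show polySubT f = f.map C - C X from rfl, h3, h1]
  have hq2 : ((derivative f).map (C : K →+* Polynomial K)).natDegree = n2 :=
    natDegree_map_eq_of_injective C_injective _
  -- mapping the Sylvester matrix to the closure
  set ψ : Polynomial K →+* Polynomial Kbar := mapRingHom φ with hψdef
  have hψC : ∀ p : Polynomial K, (p.map (C : K →+* Polynomial K)).map ψ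
      = (p.map φ).map (C : Kbar →+* Polynomial Kbar) := by
    intro p
    rw [Polynomial.map_map, Polynomial.map_map]
    congr 1
    ext a
    simp [hψdef]
  have hmap1 : (polySubT f).map ψ = polySubT fb := by
    rw [show polySubT f = f.map C - C X from rfl,
      show polySubT fb = fb.map C - C X from rfl]
    rw [Polynomial.map_sub, hψC f, map_C, hfbdef]
    congr 1
    rw [hψdef]
    simp
  have hmap2 : (((derivative f).map (C : K →+* Polynomial K)).map ψ)
      = (derivative fb).map (C : Kbar →+* Polynomial Kbar) := by
    rw [hψC, hfb']
  have hDb : Db = (sylv (polySubT fb) ((derivative fb).map C) n1 n2).det := by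
    rw [hDbdef, resultant_eq_sylv _ _ hpsT hq2, ← coe_mapRingHom, ← hψdef,
      RingHom.map_det, RingHom.mapMatrix_apply, sylv_map, hmap1, hmap2]
  -- entrywise decomposition
  have hEdecomp : ∀ b : Kbar, ∀ i j : Fin (n2 + n1),
      sylv (polySubT fb) ((derivative fb).map C) n1 n2 i j
      = C ((sylv (fb - C b) (derivative fb) n1 n2) i j)
        + (X - C b) * C ((Matrix.of fun i j : Fin (n2 + n1) =>
            if (i : ℕ) < n2 ∧ (j : ℕ) = n1 + (i : ℕ) then (-1 : Kbar) else 0) i j) := by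
    intro b i j
    simp only [sylv, Matrix.of_apply]
    by_cases hi : (i : ℕ) < n2
    · simp only [if_pos hi]
      by_cases hj : (j : ℕ) ≤ n1 + (i : ℕ)
      · simp only [if_pos hj]
        rw [polySubT_coeff fb _, coeff_sub, coeff_C]
        by_cases hk : n1 + (i : ℕ) - (j : ℕ) = 0
        · rw [if_pos hk, if_pos hk,
            if_pos (show (i : ℕ) < n2 ∧ (j : ℕ) = n1 + (i : ℕ) from ⟨hi, by omega⟩)]
          rw [map_sub, map_neg, map_one]
          ring
        · rw [if_neg hk, if_neg hk, if_neg (by rintro ⟨-, h2⟩; omega)]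
          simp
      · simp only [if_neg hj, if_neg (show ¬((i : ℕ) < n2 ∧ (j : ℕ) = n1 + (i : ℕ)) by
          rintro ⟨-, h2⟩; omega)]
        simp
    · simp only [if_neg hi, if_neg (show ¬((i : ℕ) < n2 ∧ (j : ℕ) = n1 + (i : ℕ)) by
        rintro ⟨h2, -⟩; exact hi h2)]
      by_cases hj : (j : ℕ) ≤ (i : ℕ)
      · simp only [if_pos hj, coeff_map]
        simp
      · simp only [if_neg hj]
        simp
  have hevalM : ∀ b : Kbar, Db.eval b = (sylv (fb - C b) (derivative fb) n1 n2).det := by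
    intro b
    rw [hDb, show (sylv (polySubT fb) ((derivative fb).map C) n1 n2).det.eval b
        = (evalRingHom b) (sylv (polySubT fb) ((derivative fb).map C) n1 n2).det from rfl,
      RingHom.map_det, RingHom.mapMatrix_apply]
    congr 1
    ext i j
    rw [Matrix.map_apply, hEdecomp b i j]
    simp
  have hsubCdeg : ∀ b : Kbar, (fb - C b).natDegree = n1 := by
    intro b
    rw [natDegree_sub_C, hfbdeg]
  have hsubC0 : ∀ b : Kbar, fb - C b ≠ 0 := by
    intro b h0
    have h2 := hsubCdeg b
    rw [h0, natDegree_zero] at h2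
    omega
  have hcomp : fb = gb.comp hbp := by
    rw [hfbdef, hgbdef, hhbdef, hf, Polynomial.map_comp]
  have hderf : derivative fb = derivative hbp * (derivative gb).comp hbp := by
    rw [hcomp, derivative_comp]
  have hhb'0 : derivative hbp ≠ 0 := by
    intro h0
    apply hfb'0
    rw [hderf, h0, zero_mul]
  -- main dichotomy for each simple critical value
  have hmain : ∀ b ∈ S, ∃ γ : Kbar, (derivative hbp).eval γ = 0 ∧ fb.eval γ = b := by
    intro b hbS
    have h1 : Db.rootMultiplicity b = 1 := hsimple b hbS
    have hDb0 : Db ≠ 0 := by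
      intro h0
      rw [h0, rootMultiplicity_zero] at h1
      omega
    have hroot : Db.IsRoot b := (rootMultiplicity_pos hDb0).mp (by omega)
    have hdet0 : (sylv (fb - C b) (derivative fb) n1 n2).det = 0 := by
      rw [← hevalM b]
      exact hroot
    obtain ⟨γ, hγ1, hγ2⟩ := sylv_det_eq_zero_common_root (fb - C b) (derivative fb) n1 n2
      (hsubCdeg b) hfb'deg (hsubC0 b) hfb'0 (by omega) hdet0
    have hfγ : fb.eval γ = b := by
      rw [eval_sub, eval_C, sub_eq_zero] at hγ1
      exact hγ1
    have hsplit : (derivative hbp).eval γ * ((derivative gb).comp hbp).eval γ = 0 := by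
      rw [← eval_mul, ← hderf]
      exact hγ2
    rcases mul_eq_zero.mp hsplit with hcase | hcase
    · exact ⟨γ, hcase, hfγ⟩
    exfalso
    have hgβ : (derivative gb).eval (hbp.eval γ) = 0 := by rwa [eval_comp] at hcase
    have hgbb : gb.eval (hbp.eval γ) = b := by rw [← hfγ, hcomp, eval_comp]
    have hcdeg : 2 ≤ (hbp - C (hbp.eval γ)).natDegree := by
      rw [natDegree_sub_C, hhbdef, natDegree_map_eq_of_injective hφ]
      exact hh2
    have hcp : (hbp - C (hbp.eval γ)) ∣ fb - C b := by
      obtain ⟨u, hu⟩ := X_sub_C_dvd_sub_C_eval (a := hbp.eval γ) (p := gb)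
      refine ⟨u.comp hbp, ?_⟩
      have h3 := congrArg (fun r => r.comp hbp) hu
      simp only [sub_comp, C_comp, mul_comp, X_comp] at h3
      rw [← hcomp, hgbb] at h3
      exact h3
    have hcq : (hbp - C (hbp.eval γ)) ∣ derivative fb := by
      obtain ⟨u, hu⟩ := X_sub_C_dvd_sub_C_eval (a := hbp.eval γ) (p := derivative gb)
      rw [hgβ, map_zero, sub_zero] at hu
      refine ⟨u.comp hbp * derivative hbp, ?_⟩
      have h3 := congrArg (fun r => r.comp hbp) hu
      simp only [mul_comp, sub_comp, C_comp, X_comp] at h3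
      rw [hderf, h3]
      ring
    obtain ⟨v, w, hv, hw, hind⟩ := kernel_pair (fb - C b) (derivative fb) _
      (hsubCdeg b) hfb'deg (hsubC0 b) hfb'0 hcdeg hcp hcq
    have hdvd2 : (X - C b) ^ 2 ∣ Db := by
      rw [hDb]
      exact det_dvd_sq _ _ _ b (hEdecomp b) v w hv hw hind
    have h2le : 2 ≤ Db.rootMultiplicity b := (le_rootMultiplicity_iff hDb0).mpr hdvd2
    omega
  -- counting the simple critical values
  have hmain' : ∀ b : Kbar, ∃ γ : Kbar,
      b ∈ S → ((derivative hbp).eval γ = 0 ∧ fb.eval γ = b) := by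
    intro b
    by_cases hbS : b ∈ S
    · obtain ⟨γ, h1, h2⟩ := hmain b hbS
      exact ⟨γ, fun _ => ⟨h1, h2⟩⟩
    · exact ⟨0, fun h0 => absurd h0 hbS⟩
  choose γfun hγ using hmain'
  have hcard : S.card ≤ (derivative hbp).roots.toFinset.card := by
    apply Finset.card_le_card_of_injOn γfun
    · intro b hbS
      rw [Finset.mem_coe, Multiset.mem_toFinset, mem_roots']
      exact ⟨hhb'0, (hγ b hbS).1⟩
    · intro b1 h1 b2 h2 heq
      have e1 := (hγ b1 h1).2
      have e2 := (hγ b2 h2).2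
      rw [← e1, ← e2, heq]
  have hrc : (derivative hbp).roots.toFinset.card ≤ (derivative hbp).natDegree :=
    le_trans (Multiset.toFinset_card_le _) (Polynomial.card_roots' _)
  have hhval : hbp.natDegree = h.natDegree := by
    rw [hhbdef]
    exact natDegree_map_eq_of_injective hφ h
  have hhd : (derivative hbp).natDegree < hbp.natDegree :=
    natDegree_derivative_lt (by rw [hhval]; omega)
  have hdvdh : h.natDegree ∣ f.natDegree := ⟨g.natDegree, by rw [hf, natDegree_comp]; ring⟩
  have hltf : h.natDegree < f.natDegree := by
    have hfe : f.natDegree = g.natDegree * h.natDegree := by rw [hf, natDegree_comp]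
    have h2 : 2 * h.natDegree ≤ g.natDegree * h.natDegree := Nat.mul_le_mul_right _ hg2
    omega
  have hhled : h.natDegree ≤ d := hdmax _ hdvdh hltf
  omega
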